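/- Let (ℓⁿ) for n ∈ ℕ be nonnegative reals with ∑ₙ ℓⁿ ≤ ℓ for some ℓ > 0, and suppose for each n a nonnegative random variable Mⁿ satisfies P[Mⁿ ≥ x] ≤ 2·exp(−x²/(2ℓⁿ)) for all x > 0 (with the convention that this probability is 0 when ℓⁿ = 0). Then for M = supₙ Mⁿ and all x ≥ √(4ℓ/e), P[M ≥ x] ≤ 2·exp(−x²/(4ℓ)). -/

import Mathlib

open MeasureTheory

private lemma key_ct (c t : ℝ) (hc : 0.9 / Real.exp 1 ≤ c) (ht : 1 ≤ t) :
    Real.log t ≤ c * (2 * t - 1) := by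
  have ht0 : 0 < t := lt_of_lt_of_le one_pos ht
  have hs : Real.sqrt t ^ 2 = t := Real.sq_sqrt ht0.le
  set s := Real.sqrt t with hsdef
  have hs1 : 1 ≤ s := by
    rw [show (1:ℝ) = Real.sqrt 1 by simp]; exact Real.sqrt_le_sqrt ht
  have hlog : Real.log t ≤ 2 * (s - 1) := by
    have h1 : Real.log s ≤ s - 1 := Real.log_le_sub_one_of_pos (by positivity)
    have h2 : Real.log t = 2 * Real.log s := by
      rw [← hs, Real.log_pow]; push_cast; ring
    linarith
  have he1 : Real.exp 1 < 2.7182818286 := by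
    have := Real.exp_one_lt_d9; linarith
  have he2 : (2.7182818283 : ℝ) < Real.exp 1 := by
    have := Real.exp_one_gt_d9; linarith
  have hepos : (0:ℝ) < Real.exp 1 := Real.exp_pos 1
  have hcs : 0.9 / Real.exp 1 * (2 * s^2 - 1) ≤ c * (2 * t - 1) := by
    rw [hs]
    have h2t : (1:ℝ) ≤ 2*t - 1 := by linarith
    nlinarith
  have : 2 * (s - 1) ≤ 0.9 / Real.exp 1 * (2 * s^2 - 1) := by
    rw [div_mul_eq_mul_div, le_div_iff₀ hepos]
    nlinarith [sq_nonneg (1.8 * s - Real.exp 1)]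
  linarith

-- key exponential inequality
private lemma key_exp (ℓ ℓn y : ℝ) (hℓ : 0 < ℓ) (hn : 0 < ℓn) (hle : ℓn ≤ ℓ)
    (hy : 0.9 * (4 * ℓ / Real.exp 1) ≤ y ^ 2) :
    2 * Real.exp (-y ^ 2 / (2 * ℓn)) ≤ ℓn / ℓ * (2 * Real.exp (-y ^ 2 / (4 * ℓ))) := by
  have ht : 1 ≤ ℓ / ℓn := (one_le_div hn).mpr hle
  have hc : 0.9 / Real.exp 1 ≤ y ^ 2 / (4 * ℓ) := by
    rw [div_le_div_iff₀ (Real.exp_pos 1) (by positivity)]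
    have := Real.exp_pos 1
    calc 0.9 * (4 * ℓ) = 0.9 * (4 * ℓ / Real.exp 1) * Real.exp 1 := by
          field_simp
      _ ≤ y ^ 2 * Real.exp 1 := by nlinarith [Real.exp_pos 1]
  have hk := key_ct (y ^ 2 / (4 * ℓ)) (ℓ / ℓn) hc ht
  have hlog : Real.log (ℓ / ℓn) = - Real.log (ℓn / ℓ) := by
    rw [← Real.log_inv]; congr 1; field_simp
  have hexp : ℓn / ℓ = Real.exp (Real.log (ℓn / ℓ)) :=
    (Real.exp_log (by positivity)).symm
  rw [hexp, mul_comm (Real.exp _), mul_assoc, ← Real.exp_add]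
  have h2 : Real.exp (-y ^ 2 / (2 * ℓn)) ≤
      Real.exp (-y ^ 2 / (4 * ℓ) + Real.log (ℓn / ℓ)) := by
    apply Real.exp_le_exp.mpr
    rw [hlog] at hk
    have hdiv : -y ^ 2 / (2 * ℓn) = -(y ^ 2 / (4 * ℓ) * (2 * (ℓ / ℓn))) := by
      field_simp; ring
    have hdiv2 : -y ^ 2 / (4 * ℓ) = -(y ^ 2 / (4 * ℓ)) := by ring
    rw [hdiv, hdiv2]
    nlinarith
  linarith

theorem stmt_2 {Ω : Type*} [MeasurableSpace Ω] (μ : Measure Ω) [IsProbabilityMeasure μ]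
    (ℓseq : ℕ → ℝ) (ℓ : ℝ) (hℓ : 0 < ℓ)
    (hnonneg : ∀ n, 0 ≤ ℓseq n)
    (hsum : Summable ℓseq) (hle : ∑' n, ℓseq n ≤ ℓ)
    (M : ℕ → Ω → ℝ) (hMnonneg : ∀ n ω, 0 ≤ M n ω)
    (htail : ∀ n x, 0 < x →
      (if ℓseq n = 0 then μ {ω | x ≤ M n ω} = 0
       else μ {ω | x ≤ M n ω} ≤ ENNReal.ofReal (2 * Real.exp (-x ^ 2 / (2 * ℓseq n)))))
    (x : ℝ) (hx : Real.sqrt (4 * ℓ / Real.exp 1) ≤ x) :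
    μ {ω | x ≤ ⨆ n, M n ω} ≤ ENNReal.ofReal (2 * Real.exp (-x ^ 2 / (4 * ℓ))) := by
  have hcpos : 0 < Real.sqrt (4 * ℓ / Real.exp 1) :=
    Real.sqrt_pos.mpr (by positivity)
  have hxpos : 0 < x := lt_of_lt_of_le hcpos hx
  -- Claim B : union bound for y in the good range
  have claimB : ∀ y : ℝ, 0 < y → 0.9 * (4 * ℓ / Real.exp 1) ≤ y ^ 2 →
      μ (⋃ n, {ω | y ≤ M n ω}) ≤ ENNReal.ofReal (2 * Real.exp (-y ^ 2 / (4 * ℓ))) := by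
    intro y hy hy2
    calc μ (⋃ n, {ω | y ≤ M n ω}) ≤ ∑' n, μ {ω | y ≤ M n ω} := measure_iUnion_le _
      _ ≤ ∑' n, ENNReal.ofReal (ℓseq n * (2 * Real.exp (-y ^ 2 / (4 * ℓ)) / ℓ)) := by
          apply ENNReal.tsum_le_tsum
          intro n
          have h := htail n y hy
          by_cases hn : ℓseq n = 0
          · simp only [hn, if_true] at h
            rw [h]; exact zero_le
          · simp only [hn, if_false] at h
            refine h.trans (ENNReal.ofReal_le_ofReal ?_)
            have hnpos : 0 < ℓseq n := lt_of_le_of_ne (hnonneg n) (Ne.symm hn)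
            have hnle : ℓseq n ≤ ℓ := by
              calc ℓseq n ≤ ∑' m, ℓseq m := Summable.le_tsum hsum n (fun m _ => hnonneg m)
                _ ≤ ℓ := hle
            have := key_exp ℓ (ℓseq n) y hℓ hnpos hnle hy2
            calc 2 * Real.exp (-y ^ 2 / (2 * ℓseq n))
                ≤ ℓseq n / ℓ * (2 * Real.exp (-y ^ 2 / (4 * ℓ))) := this
              _ = ℓseq n * (2 * Real.exp (-y ^ 2 / (4 * ℓ)) / ℓ) := by ring
      _ = ENNReal.ofReal (∑' n, ℓseq n * (2 * Real.exp (-y ^ 2 / (4 * ℓ)) / ℓ)) := by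
          rw [ENNReal.ofReal_tsum_of_nonneg]
          · intro n; exact mul_nonneg (hnonneg n) (by positivity)
          · exact hsum.mul_right _
      _ ≤ ENNReal.ofReal (2 * Real.exp (-y ^ 2 / (4 * ℓ))) := by
          apply ENNReal.ofReal_le_ofReal
          rw [tsum_mul_right]
          have hC : 0 ≤ 2 * Real.exp (-y ^ 2 / (4 * ℓ)) := by positivity
          calc (∑' n, ℓseq n) * (2 * Real.exp (-y ^ 2 / (4 * ℓ)) / ℓ)
              ≤ ℓ * (2 * Real.exp (-y ^ 2 / (4 * ℓ)) / ℓ) := by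
                apply mul_le_mul_of_nonneg_right hle (by positivity)
            _ = 2 * Real.exp (-y ^ 2 / (4 * ℓ)) := by field_simp
  -- Now pass to the limit y → x⁻
  have hsub : ∀ y : ℝ, y < x →
      {ω | x ≤ ⨆ n, M n ω} ⊆ ⋃ n, {ω | y ≤ M n ω} := by
    intro y hyx ω hω
    simp only [Set.mem_setOf_eq] at hω
    have hbdd : BddAbove (Set.range fun n => M n ω) := by
      by_contra hb
      rw [Real.iSup_of_not_bddAbove hb] at hω
      linarith
    have : y < ⨆ n, M n ω := lt_of_lt_of_le hyx hω
    rw [lt_ciSup_iff hbdd] at this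
    obtain ⟨n, hn⟩ := this
    exact Set.mem_iUnion.mpr ⟨n, hn.le⟩
  set a := Real.sqrt 0.9 * x with ha
  have h09 : Real.sqrt 0.9 < 1 := by
    rw [show (1:ℝ) = Real.sqrt 1 by simp]
    exact Real.sqrt_lt_sqrt (by norm_num) (by norm_num)
  have hax : a < x := by
    calc a < 1 * x := by
          apply mul_lt_mul_of_pos_right h09 hxpos
      _ = x := one_mul x
  have hkey : ∀ y ∈ Set.Ioo a x,
      μ {ω | x ≤ ⨆ n, M n ω} ≤ ENNReal.ofReal (2 * Real.exp (-y ^ 2 / (4 * ℓ))) := by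
    intro y ⟨hya, hyx⟩
    have hypos : 0 < y := by
      have : 0 ≤ a := by positivity
      linarith
    have hy2 : 0.9 * (4 * ℓ / Real.exp 1) ≤ y ^ 2 := by
      have h1 : a ^ 2 ≤ y ^ 2 := by
        apply sq_le_sq' <;> nlinarith [mul_nonneg (Real.sqrt_nonneg 0.9) hxpos.le]
      have h2 : a ^ 2 = 0.9 * x ^ 2 := by
        rw [ha, mul_pow, Real.sq_sqrt (by norm_num : (0.9:ℝ) ≥ 0)]
      have h3 : 4 * ℓ / Real.exp 1 ≤ x ^ 2 := by
        have := Real.sq_sqrt (show (0:ℝ) ≤ 4 * ℓ / Real.exp 1 by positivity)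
        nlinarith [Real.sqrt_nonneg (4 * ℓ / Real.exp 1)]
      nlinarith
    exact (measure_mono (hsub y hyx)).trans (claimB y hypos hy2)
  -- limit
  have htend : Filter.Tendsto (fun y : ℝ => ENNReal.ofReal (2 * Real.exp (-y ^ 2 / (4 * ℓ))))
      (nhdsWithin x (Set.Iio x)) (nhds (ENNReal.ofReal (2 * Real.exp (-x ^ 2 / (4 * ℓ))))) := by
    apply Filter.Tendsto.mono_left _ nhdsWithin_le_nhds
    apply ENNReal.continuous_ofReal.continuousAt.tendsto.comp
    exact (Continuous.tendsto (by continuity) x)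
  refine ge_of_tendsto htend ?_
  filter_upwards [Ioo_mem_nhdsLT_of_mem ⟨hax, le_refl x⟩] with y hy
  exact hkey y hy
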